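/- Let F : [a,b] → [0,1] be a strictly increasing continuous CDF with inverse Q, let F̂ : ℝ → ℝ be a right-continuous step function (the empirical CDF of a sample with values in [a,b]) with F̂(a⁻)=0, F̂(b)=1, and let φ : [0,1] → ℝ be of bounded variation. Then the change-of-variables identity ∫_0^1 φ(z) d[F̂(Q(z)) - z] = ∫_a^b φ(F(x)) d[F̂(x) - F(x)] holds (Riemann–Stieltjes integrals). -/

import Mathlib

/-- `RSIntegralEq f g a b I` : the Riemann–Stieltjes integral `∫_a^b f dg` exists
and equals `I`. -/
def RSIntegralEq (f g : ℝ → ℝ) (a b I : ℝ) : Prop :=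
  ∀ ε > 0, ∃ δ > 0, ∀ (n : ℕ) (p t : ℕ → ℝ),
    0 < n → p 0 = a → p n = b → (∀ i < n, p i ≤ p (i + 1)) →
    (∀ i < n, p (i + 1) - p i < δ) →
    (∀ i < n, t i ∈ Set.Icc (p i) (p (i + 1))) →
    |(∑ i ∈ Finset.range n, f (t i) * (g (p (i + 1)) - g (p i))) - I| < ε

theorem stmt_16 (a b : ℝ) (hab : a < b) (F Q Fhat φ : ℝ → ℝ)
    (hFc : ContinuousOn F (Set.Icc a b))
    (hFmono : StrictMonoOn F (Set.Icc a b))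
    (hFa : F a = 0) (hFb : F b = 1)
    (hQF : ∀ x ∈ Set.Icc a b, Q (F x) = x)
    (hFQ : ∀ z ∈ Set.Icc (0:ℝ) 1, F (Q z) = z ∧ Q z ∈ Set.Icc a b)
    (hFhat : BoundedVariationOn Fhat (Set.Icc a b))
    (hφ : Continuous φ)
    (I J : ℝ)
    (hI : RSIntegralEq φ (fun z => Fhat (Q z) - z) 0 1 I)
    (hJ : RSIntegralEq (fun x => φ (F x)) (fun x => Fhat x - F x) a b J) :
    I = J := by
  -- Basic facts about `Q`
  have hQmem : ∀ z ∈ Set.Icc (0:ℝ) 1, Q z ∈ Set.Icc a b := fun z hz => (hFQ z hz).2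
  have hQmono : ∀ z ∈ Set.Icc (0:ℝ) 1, ∀ z' ∈ Set.Icc (0:ℝ) 1, z ≤ z' → Q z ≤ Q z' := by
    intro z hz z' hz' hle
    by_contra h
    push_neg at h
    have := hFmono (hQmem z' hz') (hQmem z hz) h
    rw [(hFQ z hz).1, (hFQ z' hz').1] at this
    exact absurd hle (not_le.mpr this)
  -- F maps [a,b] into [0,1]
  have hFmem : ∀ x ∈ Set.Icc a b, F x ∈ Set.Icc (0:ℝ) 1 := by
    intro x hx
    constructor
    · rw [← hFa]
      exact hFmono.monotoneOn ⟨le_refl a, hab.le⟩ hx hx.1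
    · rw [← hFb]
      exact hFmono.monotoneOn hx ⟨hab.le, le_refl b⟩ hx.2
  -- `Q` is continuous on [0,1]
  have hQcont : ContinuousOn Q (Set.Icc (0:ℝ) 1) := by
    set e : Set.Icc a b → Set.Icc (0:ℝ) 1 := fun x => ⟨F x, hFmem x x.2⟩ with he
    have he_cont : Continuous e := by
      apply Continuous.subtype_mk
      exact hFc.restrict
    have he_bij : Function.Bijective e := by
      constructor
      · intro x y hxy
        have : F x = F y := congrArg Subtype.val hxy
        exact Subtype.ext (hFmono.injOn x.2 y.2 this)
      · intro z
        refine ⟨⟨Q z, hQmem z z.2⟩, ?_⟩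
        exact Subtype.ext ((hFQ z z.2).1)
    let E : Set.Icc a b ≃ Set.Icc (0:ℝ) 1 := Equiv.ofBijective e he_bij
    have hE_cont : Continuous E := he_cont
    let h := Continuous.homeoOfEquivCompactToT2 (f := E) hE_cont
    rw [continuousOn_iff_continuous_restrict]
    have hrestr : (Set.Icc (0:ℝ) 1).domRestrict Q = fun z => ((h.symm z : Set.Icc a b) : ℝ) := by
      funext z
      have hz := z.2
      have hQz : h ⟨Q z, hQmem z hz⟩ = z := Subtype.ext ((hFQ z hz).1)
      have hsz : h.symm z = ⟨Q z, hQmem z hz⟩ := h.symm_apply_eq.mpr hQz.symm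
      simp [hsz, Set.domRestrict_apply]
    rw [hrestr]
    exact continuous_subtype_val.comp h.symm.continuous
  have hQuc := isCompact_Icc.uniformContinuousOn_of_continuous hQcont
  rw [Metric.uniformContinuousOn_iff] at hQuc
  -- main estimate
  have key : ∀ ε > 0, |I - J| < ε := by
    intro ε hε
    obtain ⟨δ₁, hδ₁pos, hδ₁⟩ := hI (ε/2) (by positivity)
    obtain ⟨δ₂, hδ₂pos, hδ₂⟩ := hJ (ε/2) (by positivity)
    obtain ⟨δ₃, hδ₃pos, hδ₃⟩ := hQuc δ₂ hδ₂pos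
    obtain ⟨m, hm⟩ := exists_nat_one_div_lt (lt_min hδ₁pos hδ₃pos)
    set n : ℕ := m + 1 with hn
    have hnpos : 0 < n := Nat.succ_pos m
    have hnR : (0:ℝ) < n := by exact_mod_cast hnpos
    have hmesh : 1 / (n:ℝ) < min δ₁ δ₃ := by
      have : ((n:ℝ)) = (m:ℝ) + 1 := by push_cast [hn]; ring
      rw [this]; exact hm
    set p : ℕ → ℝ := fun i => (i:ℝ) / n with hp
    have hp0 : p 0 = 0 := by simp [hp]
    have hpn : p n = 1 := by
      simp only [hp]
      exact div_self (ne_of_gt hnR)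
    have hpmono : ∀ i < n, p i ≤ p (i + 1) := by
      intro i _
      simp only [hp]
      gcongr
      omega
    have hpmesh : ∀ i < n, p (i + 1) - p i < min δ₁ δ₃ := by
      intro i _
      have hn0 : (n:ℝ) ≠ 0 := ne_of_gt hnR
      have key : p (i + 1) - p i = 1 / n := by
        simp only [hp]; push_cast; field_simp; ring
      rw [key]; exact hmesh
    have hpIcc : ∀ i ≤ n, p i ∈ Set.Icc (0:ℝ) 1 := by
      intro i hi
      constructor
      · positivity
      · rw [← hpn]
        simp only [hp]
        gcongr
    set q : ℕ → ℝ := fun i => Q (p i) with hq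
    -- mesh of q
    have hqmesh : ∀ i < n, q (i + 1) - q i < δ₂ := by
      intro i hi
      have h1 := hpIcc i (le_of_lt hi)
      have h2 := hpIcc (i + 1) hi
      have hd : dist (p (i+1)) (p i) < δ₃ := by
        rw [Real.dist_eq, abs_of_nonneg (by linarith [hpmono i hi])]
        exact lt_of_lt_of_le (hpmesh i hi) (min_le_right _ _)
      have := hδ₃ (p (i+1)) h2 (p i) h1 hd
      rw [Real.dist_eq] at this
      calc q (i+1) - q i ≤ |Q (p (i+1)) - Q (p i)| := le_abs_self _
        _ < δ₂ := this
    have hqmono : ∀ i < n, q i ≤ q (i + 1) := by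
      intro i hi
      exact hQmono _ (hpIcc i hi.le) _ (hpIcc (i+1) hi) (hpmono i hi)
    have hq0 : q 0 = a := by
      simp only [hq, hp0]
      rw [← hFa]
      exact hQF a ⟨le_refl a, hab.le⟩
    have hqn : q n = b := by
      simp only [hq, hpn]
      rw [← hFb]
      exact hQF b ⟨hab.le, le_refl b⟩
    -- the two Riemann sums for the common partition agree
    set S : ℝ := ∑ i ∈ Finset.range n,
        φ (p i) * ((Fhat (Q (p (i+1))) - p (i+1)) - (Fhat (Q (p i)) - p i)) with hS
    have hSI : |S - I| < ε / 2 := by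
      apply hδ₁ n p p hnpos hp0 hpn hpmono
        (fun i hi => lt_of_lt_of_le (hpmesh i hi) (min_le_left _ _))
        (fun i hi => ⟨le_refl _, hpmono i hi⟩)
    have hSJ : |S - J| < ε / 2 := by
      have hSq : S = ∑ i ∈ Finset.range n,
          φ (F (q i)) * ((Fhat (q (i+1)) - F (q (i+1))) - (Fhat (q i) - F (q i))) := by
        apply Finset.sum_congr rfl
        intro i hi
        rw [Finset.mem_range] at hi
        simp only [hq]
        rw [(hFQ (p i) (hpIcc i hi.le)).1, (hFQ (p (i+1)) (hpIcc (i+1) hi)).1]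
      rw [hSq]
      apply hδ₂ n q q hnpos hq0 hqn hqmono hqmesh
        (fun i hi => ⟨le_refl _, hqmono i hi⟩)
    rw [abs_sub_lt_iff] at hSI hSJ ⊢
    constructor <;> linarith [hSI.1, hSI.2, hSJ.1, hSJ.2]
  by_contra hne
  exact absurd (key |I - J| (abs_pos.mpr (sub_ne_zero.mpr hne))) (lt_irrefl _)
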